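/- For any attribution rule a (a function mapping a nonempty time-ordered sequence of impressions and a conversion to nonnegative weights on the impressions summing to 1), the user × publisher adjacency relation with post-attribution contribution bound enforcement is invalid: for every integer p ≥ 2 there exist adjacent datasets D and D' (differing by all impressions of one (user, publisher) pair), with contribution bound r = 1, such that ‖attr(D) - attr(D')‖₁ ≥ 0.5(p - 1). -/

import Mathlib

/-! Framework for differentially private ad conversion measurement
(Delaney et al., "Differentially Private Ad Conversion Measurement"). -/

structure Impression where
  time : ℕ
  user : ℕ
  pub : ℕ
  adv : ℕ
  id : ℕ
deriving DecidableEq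

structure Conversion where
  time : ℕ
  user : ℕ
  adv : ℕ
  id : ℕ
deriving DecidableEq

structure Dataset where
  imps : List Impression
  convs : List Conversion

/-- An attribution rule maps a time-ordered list of impressions and a conversion
to a list of credits (one per impression). -/
abbrev AttrRule := List Impression → Conversion → List ℝ

/-- A valid attribution rule outputs one nonnegative weight per impression, summing to 1. -/
def ValidRule (a : AttrRule) : Prop :=
  ∀ is c, is ≠ [] →
    (a is c).length = is.length ∧ (a is c).sum = 1 ∧ ∀ w ∈ a is c, (0 : ℝ) ≤ w

/-- Impressions eligible for attribution of conversion `c`: those occurring earlier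
with the same user and advertiser. -/
def eligible (D : Dataset) (c : Conversion) : List Impression :=
  D.imps.filter fun i => decide (i.time < c.time ∧ i.user = c.user ∧ i.adv = c.adv)

/-- ℓ₁ distance between attributed datasets. -/
noncomputable def l1dist (w w' : (Impression × Conversion) →₀ ℝ) : ℝ :=
  (w - w').sum fun _ v => |v|

/-- Impressions and conversions are listed in time order. -/
def SortedDS (D : Dataset) : Prop :=
  D.imps.Pairwise (fun i j => i.time ≤ j.time) ∧
  D.convs.Pairwise (fun c c' => c.time ≤ c'.time)

/-- Inner loop of post-attribution contribution-bound enforcement: each weighted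
(impression, conversion) pair is kept only if the remaining bound of its scope covers
the weight, in which case the weight is deducted. -/
noncomputable def applyPairs {σ : Type} [DecidableEq σ] (s : Impression → σ) (c : Conversion) :
    List (Impression × ℝ) → (σ → ℝ) × ((Impression × Conversion) →₀ ℝ) →
      (σ → ℝ) × ((Impression × Conversion) →₀ ℝ)
  | [], st => st
  | (i, w) :: rest, st =>
      if w ≤ st.1 (s i) then
        applyPairs s c rest
          (Function.update st.1 (s i) (st.1 (s i) - w), st.2 + Finsupp.single (i, c) w)
      else
        applyPairs s c rest st

/-- Attribution with post-attribution contribution bound enforcement (Algorithm 1),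
with contribution bounding scope map `s` and contribution bound `r`. -/
noncomputable def postAttr {σ : Type} [DecidableEq σ] (a : AttrRule) (s : Impression → σ)
    (r : ℝ) (D : Dataset) : (Impression × Conversion) →₀ ℝ :=
  (D.convs.foldl
    (fun st c => applyPairs s c ((eligible D c).zip (a (eligible D c) c)) st)
    ((fun _ => r : σ → ℝ), (0 : (Impression × Conversion) →₀ ℝ))).2

/-- Attribution with pre-attribution contribution bound enforcement (Algorithm 2):
for each conversion, every scope with an eligible impression pays one unit of its bound
if available, otherwise its impressions are excluded from attribution. -/
noncomputable def preAttr {σ : Type} [DecidableEq σ] (a : AttrRule) (s : Impression → σ)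
    (r : ℝ) (D : Dataset) : (Impression × Conversion) →₀ ℝ :=
  (D.convs.foldl
    (fun (st : (σ → ℝ) × ((Impression × Conversion) →₀ ℝ)) c =>
      let el := eligible D c
      let surv := el.filter fun i => decide ((1 : ℝ) ≤ st.1 (s i))
      let scopes := (el.map s).dedup
      ((fun x => if x ∈ scopes ∧ (1 : ℝ) ≤ st.1 x then st.1 x - 1 else st.1 x : σ → ℝ),
        st.2 + ((surv.zip (a surv c)).map fun p => Finsupp.single (p.1, c) p.2).sum))
    ((fun _ => r : σ → ℝ), (0 : (Impression × Conversion) →₀ ℝ))).2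

/-- Attribution without any contribution bound enforcement. -/
noncomputable def attrNoCap (a : AttrRule) (D : Dataset) :
    (Impression × Conversion) →₀ ℝ :=
  (D.convs.map fun c =>
    (((eligible D c).zip (a (eligible D c) c)).map fun p => Finsupp.single (p.1, c) p.2).sum).sum

/-- Adjacency: `D'` results from `D` by adding a single impression (in time order). -/
def AddOneImpression (D D' : Dataset) : Prop :=
  ∃ (i0 : Impression) (l₁ l₂ : List Impression),
    D.imps = l₁ ++ l₂ ∧ D'.imps = l₁ ++ i0 :: l₂ ∧ D.convs = D'.convs

/-- Adjacency: `D` results from `D'` by removing all impressions whose scope (under `si`)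
is `v` and all conversions whose scope (under `sc`) is `v`. -/
def RemovesScope {σ : Type} [DecidableEq σ] (si : Impression → σ)
    (sc : Conversion → Option σ) (v : σ) (D D' : Dataset) : Prop :=
  D.imps = D'.imps.filter (fun i => decide (si i ≠ v)) ∧
  D.convs = D'.convs.filter (fun c => decide (sc c ≠ some v))

/-- First-touch attribution. -/
noncomputable def FTA : AttrRule := fun is _ =>
  match is with
  | [] => []
  | _ :: t => 1 :: t.map fun _ => 0

/-- Last-touch attribution. -/
noncomputable def LTA : AttrRule := fun is _ =>
  match is with
  | [] => []
  | _ :: _ => List.replicate (is.length - 1) 0 ++ [1]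

/-- Uniform multi-touch attribution. -/
noncomputable def UNI : AttrRule := fun is _ => is.map fun _ => ((is.length : ℝ))⁻¹

/-- U-shaped attribution. -/
noncomputable def USH : AttrRule := fun is _ =>
  match is with
  | [] => []
  | [_] => [1]
  | [_, _] => [0.5, 0.5]
  | _ :: _ :: _ :: _ =>
      (0.4 : ℝ) :: (List.replicate (is.length - 2) ((0.2 : ℝ) / ((is.length : ℝ) - 2)) ++ [0.4])

/-- Exponential time decay attribution with half-life `th`. -/
noncomputable def EXPR (th : ℝ) : AttrRule := fun is c =>
  let wt : Impression → ℝ := fun i => (2 : ℝ) ^ (-(((c.time : ℝ) - (i.time : ℝ)) / th))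
  is.map fun i => wt i / (is.map wt).sum

namespace Thm51

section ApplyPairs
variable {σ : Type} [DecidableEq σ] (s : Impression → σ) (c : Conversion)

lemma applyPairs_snd_ne (l : List (Impression × ℝ))
    (st : (σ → ℝ) × ((Impression × Conversion) →₀ ℝ)) (i₀ : Impression) (c₀ : Conversion)
    (h : c₀ ≠ c) : (applyPairs s c l st).2 (i₀, c₀) = st.2 (i₀, c₀) := by
  induction l generalizing st with
  | nil => rfl
  | cons x t ih =>
    obtain ⟨i, w⟩ := x
    rw [applyPairs]
    split
    · rw [ih]
      simp only [Finsupp.add_apply, Finsupp.single_apply, Prod.mk.injEq]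
      have : ¬ (i = i₀ ∧ c = c₀) := fun e => h e.2.symm
      simp [this]
    · exact ih st

lemma applyPairs_snd_nonneg (l : List (Impression × ℝ))
    (st : (σ → ℝ) × ((Impression × Conversion) →₀ ℝ)) (y : Impression × Conversion)
    (hw : ∀ x ∈ l, 0 ≤ x.2) (h0 : 0 ≤ st.2 y) :
    0 ≤ (applyPairs s c l st).2 y := by
  induction l generalizing st with
  | nil => exact h0
  | cons x t ih =>
    obtain ⟨i, w⟩ := x
    have hw0 : (0:ℝ) ≤ w := hw (i, w) (List.mem_cons_self)
    have hwt : ∀ x ∈ t, (0:ℝ) ≤ x.2 := fun x hx => hw x (List.mem_cons_of_mem _ hx)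
    rw [applyPairs]
    split
    · refine ih _ hwt ?_
      simp only [Finsupp.add_apply, Finsupp.single_apply]
      positivity
    · exact ih _ hwt h0

lemma applyPairs_snd_le (l : List (Impression × ℝ))
    (st : (σ → ℝ) × ((Impression × Conversion) →₀ ℝ)) (y : Impression × Conversion)
    (hw : ∀ x ∈ l, 0 ≤ x.2) :
    (applyPairs s c l st).2 y ≤
      st.2 y + ((l.filter (fun x => decide ((x.1, c) = y))).map Prod.snd).sum := by
  induction l generalizing st with
  | nil => rw [applyPairs]; simp
  | cons x t ih =>
    obtain ⟨i, w⟩ := x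
    have hw0 : (0:ℝ) ≤ w := hw (i, w) (List.mem_cons_self)
    have hwt : ∀ x ∈ t, (0:ℝ) ≤ x.2 := fun x hx => hw x (List.mem_cons_of_mem _ hx)
    rw [applyPairs]
    split
    · refine (ih _ hwt).trans ?_
      by_cases hy : (i, c) = y
      · simp [List.filter_cons, hy, Finsupp.single_apply]
        linarith
      · simp [List.filter_cons, hy, Finsupp.single_apply]
    · refine (ih _ hwt).trans ?_
      by_cases hy : (i, c) = y
      · simp [List.filter_cons, hy]
        linarith
      · simp [List.filter_cons, hy]

lemma applyPairs_fst_eq (l : List (Impression × ℝ))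
    (st : (σ → ℝ) × ((Impression × Conversion) →₀ ℝ)) (x : σ)
    (h : ∀ q ∈ l, s q.1 ≠ x) :
    (applyPairs s c l st).1 x = st.1 x := by
  induction l generalizing st with
  | nil => rfl
  | cons q t ih =>
    obtain ⟨i, w⟩ := q
    rw [applyPairs]
    split
    · rw [ih _ (fun q hq => h q (List.mem_cons_of_mem _ hq))]
      exact Function.update_of_ne (Ne.symm (h (i, w) (List.mem_cons_self))) _ _
    · exact ih _ (fun q hq => h q (List.mem_cons_of_mem _ hq))

end ApplyPairs

section Fold
variable (a : AttrRule) {σ : Type} [DecidableEq σ] (s : Impression → σ) (D : Dataset)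

lemma zip_w_nonneg (ha : ValidRule a) (c : Conversion) :
    ∀ x ∈ (eligible D c).zip (a (eligible D c) c), (0:ℝ) ≤ x.2 := by
  intro x hx
  cases h : eligible D c with
  | nil => rw [h] at hx; simp at hx
  | cons b t =>
      rw [h] at hx
      have hne : eligible D c ≠ [] := by rw [h]; simp
      have := (ha _ c hne).2.2
      rw [h] at this
      exact this _ (List.of_mem_zip hx).2

lemma foldl_snd_ne (l : List Conversion)
    (st : (σ → ℝ) × ((Impression × Conversion) →₀ ℝ)) (i₀ : Impression) (c₀ : Conversion)
    (h : ∀ c ∈ l, c ≠ c₀) :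
    (l.foldl (fun st c => applyPairs s c ((eligible D c).zip (a (eligible D c) c)) st) st).2 (i₀, c₀)
      = st.2 (i₀, c₀) := by
  induction l generalizing st with
  | nil => rfl
  | cons c t ih =>
      rw [List.foldl_cons, ih _ (fun c' hc' => h c' (List.mem_cons_of_mem _ hc'))]
      exact applyPairs_snd_ne _ _ _ _ _ _ (Ne.symm (h c (List.mem_cons_self)))

lemma foldl_snd_nonneg (ha : ValidRule a) (l : List Conversion)
    (st : (σ → ℝ) × ((Impression × Conversion) →₀ ℝ)) (y : Impression × Conversion)
    (h0 : 0 ≤ st.2 y) :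
    0 ≤ (l.foldl (fun st c => applyPairs s c ((eligible D c).zip (a (eligible D c) c)) st) st).2 y := by
  induction l generalizing st with
  | nil => exact h0
  | cons c t ih =>
      rw [List.foldl_cons]
      exact ih _ (applyPairs_snd_nonneg _ _ _ _ _ (zip_w_nonneg a D ha c) h0)

end Fold

section Construction

lemma filter_flatMap_single {α β : Type} (f : α → List β) (P : β → Bool) (l : List α) (q0 : α)
    (h0 : q0 ∈ l) (hnd : l.Nodup) (hq0 : ∀ b ∈ f q0, P b = true)
    (hother : ∀ q ∈ l, q ≠ q0 → ∀ b ∈ f q, P b = false) :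
    (l.flatMap f).filter P = f q0 := by
  induction l with
  | nil => cases h0
  | cons x t ih =>
      rw [List.flatMap_cons, List.filter_append]
      rcases List.mem_cons.1 h0 with rfl | h0t
      · have hx : q0 ∉ t := (List.nodup_cons.1 hnd).1
        have h1 : (f q0).filter P = f q0 := List.filter_eq_self.2 hq0
        have h2 : (t.flatMap f).filter P = [] := by
          rw [List.filter_eq_nil_iff]
          intro b hb
          rcases List.mem_flatMap.1 hb with ⟨q, hq, hbq⟩
          have := hother q (List.mem_cons_of_mem _ hq) (fun e => hx (e ▸ hq)) b hbq
          simp [this]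
        rw [h1, h2, List.append_nil]
      · have hxne : x ≠ q0 := fun e => (List.nodup_cons.1 hnd).1 (e ▸ h0t)
        have h1 : (f x).filter P = [] := by
          rw [List.filter_eq_nil_iff]
          intro b hb
          have := hother x (List.mem_cons_self) hxne b hb
          simp [this]
        rw [h1, List.nil_append]
        exact ih h0t (List.nodup_cons.1 hnd).2
          (fun q hq hne b hb => hother q (List.mem_cons_of_mem _ hq) hne b hb)

variable (p : ℕ)

def imp (j k m : ℕ) : Impression := ⟨0, 0, m, j * p + k, 0⟩
def cnv (j k : ℕ) : Conversion := ⟨1, 0, j * p + k, 0⟩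
def L : List (ℕ × ℕ) := (List.range p).flatMap fun k => (List.range k).map fun j => (j, k)

lemma mem_L {q : ℕ × ℕ} : q ∈ L p ↔ q.1 < q.2 ∧ q.2 < p := by
  obtain ⟨j, k⟩ := q
  simp only [L, List.mem_flatMap, List.mem_map, List.mem_range, Prod.mk.injEq]
  constructor
  · rintro ⟨k', hk', j', hj', rfl, rfl⟩; exact ⟨hj', hk'⟩
  · rintro ⟨h1, h2⟩; exact ⟨k, h2, j, h1, rfl, rfl⟩

lemma nodup_L : (L p).Nodup := by
  rw [L, List.nodup_flatMap]
  constructor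
  · intro k _
    exact (List.nodup_range (n := k)).map (fun j j' e => by
      simpa using congrArg Prod.fst e)
  · refine (List.pairwise_lt_range (n := p)).imp ?_
    intro k k' hkk
    intro x hx hx'
    rcases List.mem_map.1 hx with ⟨j, _, rfl⟩
    rcases List.mem_map.1 hx' with ⟨j', _, e⟩
    exact absurd (congrArg Prod.snd e).symm (by simpa using Nat.ne_of_lt hkk)

lemma advInj {j k j' k' : ℕ} (hk : k < p) (hk' : k' < p) (h : j * p + k = j' * p + k') :
    j = j' ∧ k = k' := by
  have hp : 0 < p := Nat.lt_of_le_of_lt (Nat.zero_le _) hk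
  have h1 : (j * p + k) % p = k := by
    rw [Nat.add_comm, Nat.add_mul_mod_self_right]; exact Nat.mod_eq_of_lt hk
  have h2 : (j' * p + k') % p = k' := by
    rw [Nat.add_comm, Nat.add_mul_mod_self_right]; exact Nat.mod_eq_of_lt hk'
  have hkk : k = k' := by rw [← h1, ← h2, h]
  constructor
  · have := Nat.eq_of_mul_eq_mul_right hp (by omega : j * p = j' * p)
    exact this
  · exact hkk

def Lsel (ℓ : ℕ) : List (ℕ × ℕ) := (L p).filter fun q => decide (q.1 = ℓ ∨ q.2 = ℓ)
def Lrest (ℓ : ℕ) : List (ℕ × ℕ) := (L p).filter fun q => !decide (q.1 = ℓ ∨ q.2 = ℓ)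
def oth (ℓ : ℕ) (q : ℕ × ℕ) : ℕ := if q.1 = ℓ then q.2 else q.1

def DS' (ℓ : ℕ) : Dataset :=
  ⟨(L p).flatMap fun q => [imp p q.1 q.2 q.1, imp p q.1 q.2 q.2],
   (Lsel p ℓ ++ Lrest p ℓ).map fun q => cnv p q.1 q.2⟩

def DS (ℓ : ℕ) : Dataset :=
  ⟨(DS' p ℓ).imps.filter fun i => decide ((i.user, i.pub) ≠ ((0:ℕ), ℓ)), (DS' p ℓ).convs⟩

lemma mem_Lsel {ℓ : ℕ} {q : ℕ × ℕ} :
    q ∈ Lsel p ℓ ↔ (q.1 < q.2 ∧ q.2 < p) ∧ (q.1 = ℓ ∨ q.2 = ℓ) := by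
  simp [Lsel, List.mem_filter, mem_L]

lemma mem_Lrest {ℓ : ℕ} {q : ℕ × ℕ} :
    q ∈ Lrest p ℓ ↔ (q.1 < q.2 ∧ q.2 < p) ∧ ¬(q.1 = ℓ ∨ q.2 = ℓ) := by
  simp [Lrest, List.mem_filter, mem_L]

lemma cnv_inj {q q' : ℕ × ℕ} (hq : q ∈ L p) (hq' : q' ∈ L p)
    (h : cnv p q.1 q.2 = cnv p q'.1 q'.2) : q = q' := by
  have h1 : q.1 * p + q.2 = q'.1 * p + q'.2 := congrArg Conversion.adv h
  have h2 := advInj p ((mem_L p).1 hq).2 ((mem_L p).1 hq').2 h1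
  exact Prod.ext h2.1 h2.2

lemma eligible_DS' {ℓ : ℕ} {q : ℕ × ℕ} (hq : q ∈ L p) :
    eligible (DS' p ℓ) (cnv p q.1 q.2) = [imp p q.1 q.2 q.1, imp p q.1 q.2 q.2] := by
  have hq2 : q.2 < p := ((mem_L p).1 hq).2
  show ((L p).flatMap fun q => [imp p q.1 q.2 q.1, imp p q.1 q.2 q.2]).filter _ = _
  refine filter_flatMap_single _ _ _ q hq (nodup_L p) ?_ ?_
  · intro b hb
    rcases List.mem_pair.1 hb with rfl | rfl <;> simp [imp, cnv]
  · intro q' hq' hne b hb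
    have hadv : q'.1 * p + q'.2 ≠ q.1 * p + q.2 := fun e => by
      have := advInj p ((mem_L p).1 hq').2 hq2 e
      exact hne (Prod.ext this.1 this.2)
    rcases List.mem_pair.1 hb with rfl | rfl <;> simp [imp, cnv, hadv]

lemma eligible_DS {ℓ : ℕ} {q : ℕ × ℕ} (hq : q ∈ L p) :
    eligible (DS p ℓ) (cnv p q.1 q.2) =
      ([imp p q.1 q.2 q.1, imp p q.1 q.2 q.2]).filter
        fun i => decide ((i.user, i.pub) ≠ ((0:ℕ), ℓ)) := by
  have h : eligible (DS p ℓ) (cnv p q.1 q.2)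
      = (eligible (DS' p ℓ) (cnv p q.1 q.2)).filter
          (fun i => decide ((i.user, i.pub) ≠ ((0:ℕ), ℓ))) := by
    show ((DS' p ℓ).imps.filter _).filter _ = _
    rw [List.filter_comm]
    rfl
  rw [h, eligible_DS' p hq]

lemma eligible_DS_sel {ℓ : ℕ} {q : ℕ × ℕ} (hq : q ∈ Lsel p ℓ) :
    eligible (DS p ℓ) (cnv p q.1 q.2) = [imp p q.1 q.2 (oth ℓ q)] := by
  obtain ⟨⟨h12, h2p⟩, hor⟩ := (mem_Lsel p).1 hq
  rw [eligible_DS p ((mem_L p).2 ⟨h12, h2p⟩)]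
  rcases hor with h1 | h2
  · have hne : q.2 ≠ ℓ := by omega
    simp [imp, oth, h1, hne, List.filter]
  · have hne : q.1 ≠ ℓ := by omega
    have h1ne : ¬ q.1 = ℓ := hne
    simp [imp, oth, h2, h1ne, List.filter]

noncomputable def ww1 (a : AttrRule) (q : ℕ × ℕ) : ℝ :=
  (a [imp p q.1 q.2 q.1, imp p q.1 q.2 q.2] (cnv p q.1 q.2)).headI
noncomputable def ww2 (a : AttrRule) (q : ℕ × ℕ) : ℝ :=
  (a [imp p q.1 q.2 q.1, imp p q.1 q.2 q.2] (cnv p q.1 q.2)).tail.headI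

lemma alist_eq {a : AttrRule} (ha : ValidRule a) (q : ℕ × ℕ) :
    a [imp p q.1 q.2 q.1, imp p q.1 q.2 q.2] (cnv p q.1 q.2) = [ww1 p a q, ww2 p a q] := by
  have h := ha [imp p q.1 q.2 q.1, imp p q.1 q.2 q.2] (cnv p q.1 q.2) (by simp)
  have h2 : (a [imp p q.1 q.2 q.1, imp p q.1 q.2 q.2] (cnv p q.1 q.2)).length = 2 := by
    simpa using h.1
  obtain ⟨x, y, hxy⟩ := List.length_eq_two.1 h2
  rw [ww1, ww2, hxy]
  simp

lemma ww_sum {a : AttrRule} (ha : ValidRule a) (q : ℕ × ℕ) :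
    ww1 p a q + ww2 p a q = 1 := by
  have h := ha [imp p q.1 q.2 q.1, imp p q.1 q.2 q.2] (cnv p q.1 q.2) (by simp)
  have := h.2.1
  rw [alist_eq p ha q] at this
  simpa using this

lemma ww1_nonneg {a : AttrRule} (ha : ValidRule a) (q : ℕ × ℕ) : 0 ≤ ww1 p a q := by
  have h := ha [imp p q.1 q.2 q.1, imp p q.1 q.2 q.2] (cnv p q.1 q.2) (by simp)
  exact h.2.2 _ (by rw [alist_eq p ha q]; simp)

lemma ww2_nonneg {a : AttrRule} (ha : ValidRule a) (q : ℕ × ℕ) : 0 ≤ ww2 p a q := by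
  have h := ha [imp p q.1 q.2 q.1, imp p q.1 q.2 q.2] (cnv p q.1 q.2) (by simp)
  exact h.2.2 _ (by rw [alist_eq p ha q]; simp)

lemma list_sum_filter_map {α : Type} (P : α → Bool) (f : α → ℝ) (l : List α) :
    ((l.filter P).map f).sum = (l.map fun x => if P x then f x else 0).sum := by
  induction l with
  | nil => rfl
  | cons x t ih => by_cases h : P x <;> simp [List.filter_cons, h, ih]

lemma sum_swap_list {α : Type} (s : Finset ℕ) (g : ℕ → α → ℝ) (l : List α) :
    ∑ ℓ ∈ s, (l.map (g ℓ)).sum = (l.map fun q => ∑ ℓ ∈ s, g ℓ q).sum := by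
  induction l with
  | nil => simp
  | cons x t ih => simp [Finset.sum_add_distrib, ih]

lemma sum_map_one {α : Type} (l : List α) : (l.map fun _ => (1:ℝ)).sum = l.length := by
  induction l with
  | nil => simp
  | cons x t ih => simp [ih]; ring

lemma L_length : ((L p).length : ℝ) = (p : ℝ) * ((p : ℝ) - 1) / 2 := by
  have h : (L p).length * 2 = p * (p - 1) := by
    rw [L, List.length_flatMap]
    have h0 : ((List.range p).map (List.length ∘ fun k => (List.range k).map fun j => ((j, k) : ℕ × ℕ))).sum
        = ((List.range p).map fun k => k).sum := by
      congr 1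
      apply List.map_congr_left
      intro k _
      simp
    rw [show (List.map (fun a => (List.map (fun j => ((j, a) : ℕ × ℕ)) (List.range a)).length) (List.range p)).sum = ((List.range p).map fun k => k).sum from h0]
    have h1 : ∀ n : ℕ, ((List.range n).map fun k => k).sum = ∑ i ∈ Finset.range n, i := by
      intro n
      induction n with
      | zero => simp
      | succ n ih =>
          rw [List.range_succ, Finset.sum_range_succ, List.map_append, List.sum_append, ← ih]
          simp
    rw [h1]
    exact Finset.sum_range_id_mul_two p
  rcases Nat.eq_zero_or_pos p with rfl | hp
  · simp [L]
  have h2 := congrArg (Nat.cast : ℕ → ℝ) h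
  push_cast [Nat.cast_sub (by omega : 1 ≤ p)] at h2
  linarith

lemma exists_good_pub {a : AttrRule} (ha : ValidRule a) (hp : 2 ≤ p) :
    ∃ ℓ < p, ((p:ℝ) - 1) / 2 ≤
      ((Lsel p ℓ).map fun q => if q.1 = ℓ then ww1 p a q else ww2 p a q).sum := by
  have hsum : (∑ ℓ ∈ Finset.range p,
      ((Lsel p ℓ).map fun q => if q.1 = ℓ then ww1 p a q else ww2 p a q).sum)
      = ((L p).length : ℝ) := by
    have hF : ∀ ℓ, ((Lsel p ℓ).map fun q => if q.1 = ℓ then ww1 p a q else ww2 p a q).sum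
        = ((L p).map fun q => if (decide (q.1 = ℓ ∨ q.2 = ℓ) : Bool)
            then (if q.1 = ℓ then ww1 p a q else ww2 p a q) else 0).sum := fun ℓ =>
      list_sum_filter_map _ _ _
    rw [Finset.sum_congr rfl fun ℓ _ => hF ℓ, sum_swap_list]
    have hone : ∀ q ∈ L p, (∑ ℓ ∈ Finset.range p,
        if (decide (q.1 = ℓ ∨ q.2 = ℓ) : Bool)
          then (if q.1 = ℓ then ww1 p a q else ww2 p a q) else 0) = 1 := by
      intro q hq
      obtain ⟨h12, h2p⟩ := (mem_L p).1 hq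
      have hpt : ∀ ℓ, (if (decide (q.1 = ℓ ∨ q.2 = ℓ) : Bool)
            then (if q.1 = ℓ then ww1 p a q else ww2 p a q) else 0)
          = (if ℓ = q.1 then ww1 p a q else 0) + (if ℓ = q.2 then ww2 p a q else 0) := by
        intro ℓ
        by_cases h1 : q.1 = ℓ
        · have h2 : ¬ q.2 = ℓ := by omega
          have e2 : ¬ ℓ = q.2 := fun e => h2 e.symm
          simp [h1, h2, e2]
        · by_cases h2 : q.2 = ℓ
          · have e1 : ¬ ℓ = q.1 := fun e => h1 e.symm
            simp [h1, h2, e1]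
          · have e1 : ¬ ℓ = q.1 := fun e => h1 e.symm
            have e2 : ¬ ℓ = q.2 := fun e => h2 e.symm
            simp [h1, h2, e1, e2]
      rw [Finset.sum_congr rfl fun ℓ _ => hpt ℓ, Finset.sum_add_distrib,
        Finset.sum_ite_eq' (Finset.range p) q.1, Finset.sum_ite_eq' (Finset.range p) q.2,
        if_pos (Finset.mem_range.2 (by omega)), if_pos (Finset.mem_range.2 h2p)]
      exact ww_sum p ha q
    rw [List.map_congr_left hone, sum_map_one]
  have hnonempty : (Finset.range p).Nonempty := ⟨0, Finset.mem_range.2 (by omega)⟩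
  have hle : ∑ ℓ ∈ Finset.range p, (((p:ℝ) - 1) / 2)
      ≤ ∑ ℓ ∈ Finset.range p,
        ((Lsel p ℓ).map fun q => if q.1 = ℓ then ww1 p a q else ww2 p a q).sum := by
    rw [hsum, Finset.sum_const, Finset.card_range, nsmul_eq_mul, L_length]
    exact le_of_eq (by ring)
  obtain ⟨ℓ, hℓ, h⟩ := Finset.exists_le_of_sum_le hnonempty hle
  exact ⟨ℓ, Finset.mem_range.1 hℓ, h⟩

lemma oth_inj {ℓ : ℕ} {q q' : ℕ × ℕ} (hq : q ∈ Lsel p ℓ) (hq' : q' ∈ Lsel p ℓ)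
    (h : oth ℓ q = oth ℓ q') : q = q' := by
  obtain ⟨⟨a1, a2⟩, b⟩ := (mem_Lsel p).1 hq
  obtain ⟨⟨c1, c2⟩, d⟩ := (mem_Lsel p).1 hq'
  have : q.1 = q'.1 ∧ q.2 = q'.2 := by
    by_cases e1 : q.1 = ℓ <;> by_cases e2 : q'.1 = ℓ <;> simp [oth, e1, e2] at h <;> omega
  exact Prod.ext this.1 this.2

lemma nodup_LL (ℓ : ℕ) : (Lsel p ℓ ++ Lrest p ℓ).Nodup := by
  rw [List.nodup_append]
  refine ⟨(nodup_L p).filter _, (nodup_L p).filter _, ?_⟩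
  intro q hq q' hq' e
  subst e
  have h1 := (mem_Lsel p).1 hq
  have h2 := (mem_Lrest p).1 hq'
  tauto

lemma Lsel_subset_L {ℓ : ℕ} {q : ℕ × ℕ} (hq : q ∈ Lsel p ℓ) : q ∈ L p :=
  (mem_L p).2 ((mem_Lsel p).1 hq).1

lemma LL_subset_L {ℓ : ℕ} {q : ℕ × ℕ} (hq : q ∈ Lsel p ℓ ++ Lrest p ℓ) : q ∈ L p := by
  rcases List.mem_append.1 hq with h | h
  · exact Lsel_subset_L p h
  · exact (mem_L p).2 ((mem_Lrest p).1 h).1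

lemma fold_sel (a : AttrRule) (ha : ValidRule a) (ℓ : ℕ) :
    ∀ (l : List (ℕ × ℕ)) (st : ((ℕ × ℕ) → ℝ) × ((Impression × Conversion) →₀ ℝ)),
      (∀ q ∈ l, q ∈ Lsel p ℓ) → l.Nodup →
      (∀ q ∈ l, st.1 ((0:ℕ), oth ℓ q) = 1) →
      (∀ q ∈ l, st.2 (imp p q.1 q.2 (oth ℓ q), cnv p q.1 q.2) = 0) →
      ∀ q ∈ l,
        ((l.map fun q => cnv p q.1 q.2).foldl
          (fun st c => applyPairs (fun i => (i.user, i.pub)) c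
            ((eligible (DS p ℓ) c).zip (a (eligible (DS p ℓ) c) c)) st) st).2
          (imp p q.1 q.2 (oth ℓ q), cnv p q.1 q.2) = 1 := by
  intro l
  induction l with
  | nil => intro st _ _ _ _ q hq; cases hq
  | cons q0 t ih =>
      intro st hmem hnd hb hz q hq
      have hq0sel : q0 ∈ Lsel p ℓ := hmem q0 (List.mem_cons_self)
      have hq0L : q0 ∈ L p := Lsel_subset_L p hq0sel
      set i0 := imp p q0.1 q0.2 (oth ℓ q0) with hi0
      set c0 := cnv p q0.1 q0.2 with hc0
      have hel : eligible (DS p ℓ) c0 = [i0] := eligible_DS_sel p hq0sel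
      have ha1 := ha [i0] c0 (by simp)
      obtain ⟨x, hx⟩ := List.length_eq_one_iff.1 ha1.1
      have hx1 : x = 1 := by
        have := ha1.2.1
        rw [hx] at this
        simpa using this
      have hzip : (eligible (DS p ℓ) c0).zip (a (eligible (DS p ℓ) c0) c0)
          = [(i0, (1:ℝ))] := by
        rw [hel, hx, hx1]
        rfl
      have hkey : ((fun (i : Impression) => (i.user, i.pub)) i0) = ((0:ℕ), oth ℓ q0) := rfl
      have hcond : (1:ℝ) ≤ st.1 ((fun (i : Impression) => (i.user, i.pub)) i0) := by
        rw [hkey, hb q0 (List.mem_cons_self)]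
      have happ : (applyPairs (fun (i : Impression) => (i.user, i.pub)) c0 [(i0, (1:ℝ))] st)
          = (Function.update st.1 ((0:ℕ), oth ℓ q0) (st.1 ((0:ℕ), oth ℓ q0) - 1),
             st.2 + Finsupp.single (i0, c0) 1) := by
        rw [applyPairs, if_pos hcond, applyPairs]
        rfl
      rw [List.map_cons, List.foldl_cons, hzip, happ]
      set st' : ((ℕ × ℕ) → ℝ) × ((Impression × Conversion) →₀ ℝ) :=
        (Function.update st.1 ((0:ℕ), oth ℓ q0) (st.1 ((0:ℕ), oth ℓ q0) - 1),
         st.2 + Finsupp.single (i0, c0) 1) with hst'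
      have hq0nt : q0 ∉ t := (List.nodup_cons.1 hnd).1
      rcases List.mem_cons.1 hq with rfl | hqt
      · -- q = q0
        rw [foldl_snd_ne]
        · rw [hst']
          dsimp only
          rw [Finsupp.add_apply, hz q (List.mem_cons_self), Finsupp.single_apply,
            if_pos rfl, zero_add]
        · intro c hc hcne
          rcases List.mem_map.1 hc with ⟨q', hq', rfl⟩
          exact hq0nt ((cnv_inj p (Lsel_subset_L p (hmem q' (List.mem_cons_of_mem _ hq')))
            hq0L hcne) ▸ hq')
      · -- q ∈ t
        refine ih st' (fun q' hq' => hmem q' (List.mem_cons_of_mem _ hq'))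
          (List.nodup_cons.1 hnd).2 ?_ ?_ q hqt
        · intro q' hq'
          have hne : ((0:ℕ), oth ℓ q') ≠ ((0:ℕ), oth ℓ q0) := fun e => by
            have : oth ℓ q' = oth ℓ q0 := (Prod.mk.injEq _ _ _ _ ▸ e).2
            exact hq0nt ((oth_inj p (hmem q' (List.mem_cons_of_mem _ hq')) hq0sel this) ▸ hq')
          rw [hst']
          dsimp only
          rw [Function.update_of_ne hne]
          exact hb q' (List.mem_cons_of_mem _ hq')
        · intro q' hq'
          have hne : (i0, c0) ≠ (imp p q'.1 q'.2 (oth ℓ q'), cnv p q'.1 q'.2) := fun e => by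
            have : c0 = cnv p q'.1 q'.2 := (Prod.mk.injEq _ _ _ _ ▸ e).2
            exact hq0nt ((cnv_inj p hq0L
              (Lsel_subset_L p (hmem q' (List.mem_cons_of_mem _ hq'))) this).symm ▸ hq')
          rw [hst']
          dsimp only
          rw [Finsupp.add_apply, hz q' (List.mem_cons_of_mem _ hq'),
            Finsupp.single_apply, if_neg hne, zero_add]

lemma DS'_val (a : AttrRule) (ha : ValidRule a) (ℓ : ℕ) {q : ℕ × ℕ} (hq : q ∈ Lsel p ℓ) :
    0 ≤ postAttr a (fun i => (i.user, i.pub)) 1 (DS' p ℓ)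
        (imp p q.1 q.2 (oth ℓ q), cnv p q.1 q.2)
    ∧ postAttr a (fun i => (i.user, i.pub)) 1 (DS' p ℓ)
        (imp p q.1 q.2 (oth ℓ q), cnv p q.1 q.2)
      ≤ (if q.1 = ℓ then ww2 p a q else ww1 p a q) := by
  obtain ⟨⟨h12, h2p⟩, hor⟩ := (mem_Lsel p).1 hq
  have hqL : q ∈ L p := (mem_L p).2 ⟨h12, h2p⟩
  set i2 := imp p q.1 q.2 (oth ℓ q) with hi2
  set c0 := cnv p q.1 q.2 with hc0
  set y : Impression × Conversion := (i2, c0) with hy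
  have hqLL : q ∈ Lsel p ℓ ++ Lrest p ℓ := List.mem_append.2 (Or.inl hq)
  obtain ⟨l1, l2, hsplit⟩ := List.append_of_mem hqLL
  have hnd : (Lsel p ℓ ++ Lrest p ℓ).Nodup := nodup_LL p ℓ
  rw [hsplit] at hnd
  have hql2 : q ∉ l2 := (List.nodup_cons.1 (List.nodup_append.1 hnd).2.1).1
  have hql1 : q ∉ l1 := fun h => (List.nodup_append.1 hnd).2.2 q h q List.mem_cons_self rfl
  have hsub1 : ∀ q' ∈ l1, q' ∈ L p := fun q' h => LL_subset_L p
    (hsplit ▸ List.mem_append.2 (Or.inl h))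
  have hsub2 : ∀ q' ∈ l2, q' ∈ L p := fun q' h => LL_subset_L p
    (hsplit ▸ List.mem_append.2 (Or.inr (List.mem_cons_of_mem _ h)))
  have hconvs : (DS' p ℓ).convs
      = (l1.map fun q => cnv p q.1 q.2) ++ c0 :: (l2.map fun q => cnv p q.1 q.2) := by
    show ((Lsel p ℓ ++ Lrest p ℓ).map fun q => cnv p q.1 q.2) = _
    rw [hsplit, List.map_append, List.map_cons]
  rw [postAttr, hconvs, List.foldl_append, List.foldl_cons]
  set st1 := ((l1.map fun q => cnv p q.1 q.2).foldl
    (fun st c => applyPairs (fun i => (i.user, i.pub)) c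
      ((eligible (DS' p ℓ) c).zip (a (eligible (DS' p ℓ) c) c)) st)
    ((fun _ => (1:ℝ)), (0 : (Impression × Conversion) →₀ ℝ))) with hst1
  have hne1 : ∀ c ∈ l1.map fun q => cnv p q.1 q.2, c ≠ c0 := by
    intro c hc hcne
    rcases List.mem_map.1 hc with ⟨q', hq', rfl⟩
    exact hql1 ((cnv_inj p (hsub1 q' hq') hqL hcne) ▸ hq')
  have hne2 : ∀ c ∈ l2.map fun q => cnv p q.1 q.2, c ≠ c0 := by
    intro c hc hcne
    rcases List.mem_map.1 hc with ⟨q', hq', rfl⟩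
    exact hql2 ((cnv_inj p (hsub2 q' hq') hqL hcne) ▸ hq')
  have hst1y : st1.2 y = 0 := by
    rw [hst1, foldl_snd_ne a _ (DS' p ℓ) _ _ _ _ hne1]
    rfl
  rw [foldl_snd_ne a _ (DS' p ℓ) _ _ _ _ hne2]
  have hel : eligible (DS' p ℓ) c0 = [imp p q.1 q.2 q.1, imp p q.1 q.2 q.2] :=
    eligible_DS' p hqL
  have hzip : (eligible (DS' p ℓ) c0).zip (a (eligible (DS' p ℓ) c0) c0)
      = [(imp p q.1 q.2 q.1, ww1 p a q), (imp p q.1 q.2 q.2, ww2 p a q)] := by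
    rw [hel, alist_eq p ha q]
    rfl
  rw [hzip]
  have hw : ∀ x ∈ [(imp p q.1 q.2 q.1, ww1 p a q), (imp p q.1 q.2 q.2, ww2 p a q)],
      (0:ℝ) ≤ x.2 := by
    intro x hx
    rcases List.mem_pair.1 hx with rfl | rfl
    · exact ww1_nonneg p ha q
    · exact ww2_nonneg p ha q
  constructor
  · exact applyPairs_snd_nonneg _ _ _ _ _ hw (le_of_eq hst1y.symm)
  · refine (applyPairs_snd_le _ _ _ _ _ hw).trans ?_
    rw [hst1y, zero_add]
    have hfil : ([(imp p q.1 q.2 q.1, ww1 p a q), (imp p q.1 q.2 q.2, ww2 p a q)].filter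
        fun x => decide ((x.1, c0) = y)) =
        if q.1 = ℓ then [(imp p q.1 q.2 q.2, ww2 p a q)] else [(imp p q.1 q.2 q.1, ww1 p a q)] := by
      rcases hor with h1 | h2
      · have hoth : oth ℓ q = q.2 := by simp [oth, h1]
        have hne12 : ¬ q.1 = q.2 := by omega
        rw [if_pos h1]
        simp [hy, hi2, List.filter_cons, imp, cnv, Impression.mk.injEq, Prod.ext_iff,
          hoth, hne12]
      · have h1ne : ¬ q.1 = ℓ := by omega
        have hoth : oth ℓ q = q.1 := by simp [oth, h1ne]
        have hne12 : ¬ q.2 = q.1 := by omega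
        rw [if_neg h1ne]
        simp [hy, hi2, List.filter_cons, imp, cnv, Impression.mk.injEq, Prod.ext_iff,
          hoth, hne12]
    rw [hfil]
    split <;> simp

lemma DS_val (a : AttrRule) (ha : ValidRule a) (ℓ : ℕ) {q : ℕ × ℕ} (hq : q ∈ Lsel p ℓ) :
    postAttr a (fun i => (i.user, i.pub)) 1 (DS p ℓ)
      (imp p q.1 q.2 (oth ℓ q), cnv p q.1 q.2) = 1 := by
  have hqL := Lsel_subset_L p hq
  have hconvs : (DS p ℓ).convs
      = ((Lsel p ℓ).map fun q => cnv p q.1 q.2) ++ ((Lrest p ℓ).map fun q => cnv p q.1 q.2) := by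
    show ((Lsel p ℓ ++ Lrest p ℓ).map fun q => cnv p q.1 q.2) = _
    rw [List.map_append]
  rw [postAttr, hconvs, List.foldl_append]
  have hne : ∀ c ∈ (Lrest p ℓ).map fun q => cnv p q.1 q.2, c ≠ cnv p q.1 q.2 := by
    intro c hc hcne
    rcases List.mem_map.1 hc with ⟨q', hq', rfl⟩
    have he : q' = q := cnv_inj p ((mem_L p).2 ((mem_Lrest p).1 hq').1) hqL hcne
    subst he
    have h1 := (mem_Lrest p).1 hq'
    have h2 := (mem_Lsel p).1 hq
    tauto
  rw [foldl_snd_ne a _ (DS p ℓ) _ _ _ _ hne]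
  exact fold_sel p a ha ℓ (Lsel p ℓ) _ (fun q' h => h) ((nodup_L p).filter _)
    (fun q' _ => rfl) (fun q' _ => rfl) q hq

lemma sorted_DS' (ℓ : ℕ) : SortedDS (DS' p ℓ) := by
  constructor
  · apply List.pairwise_of_forall_mem_list
    intro i hi j hj
    rcases List.mem_flatMap.1 hi with ⟨q, _, hiq⟩
    rcases List.mem_flatMap.1 hj with ⟨q', _, hjq⟩
    rcases List.mem_pair.1 hiq with rfl | rfl <;> rcases List.mem_pair.1 hjq with rfl | rfl <;>
      exact Nat.le_refl 0
  · apply List.pairwise_of_forall_mem_list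
    intro c hc c' hc'
    rcases List.mem_map.1 hc with ⟨q, _, rfl⟩
    rcases List.mem_map.1 hc' with ⟨q', _, rfl⟩
    exact Nat.le_refl 1

end Construction

end Thm51

/-- Theorem 5.1: for any attribution rule, the user × publisher adjacency relation with
post-attribution enforcement is invalid: with bound `r = 1`, for every `p ≥ 2` there are
adjacent datasets (differing by all impressions of one (user, publisher) pair) whose
attributed datasets are at ℓ₁-distance at least `0.5 (p - 1)`. -/
theorem post_attr_user_publisher_invalid (a : AttrRule) (ha : ValidRule a)
    (p : ℕ) (hp : 2 ≤ p) :
    ∃ (D D' : Dataset) (v : ℕ × ℕ),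
      RemovesScope (fun i => (i.user, i.pub)) (fun _ => none) v D D' ∧
      SortedDS D' ∧
      (0.5 : ℝ) * ((p : ℝ) - 1) ≤ l1dist (postAttr a (fun i => (i.user, i.pub)) 1 D)
        (postAttr a (fun i => (i.user, i.pub)) 1 D') := by
  obtain ⟨ℓ, hℓ, hW⟩ := Thm51.exists_good_pub p ha hp
  refine ⟨Thm51.DS p ℓ, Thm51.DS' p ℓ, ((0:ℕ), ℓ), ⟨rfl, by simp [Thm51.DS]⟩,
    Thm51.sorted_DS' p ℓ, ?_⟩
  set wD := postAttr a (fun i => (i.user, i.pub)) 1 (Thm51.DS p ℓ) with hwD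
  set wD' := postAttr a (fun i => (i.user, i.pub)) 1 (Thm51.DS' p ℓ) with hwD'
  set v : (Impression × Conversion) →₀ ℝ := wD - wD' with hv
  set xf : (ℕ × ℕ) → Impression × Conversion :=
    fun q => (Thm51.imp p q.1 q.2 (Thm51.oth ℓ q), Thm51.cnv p q.1 q.2) with hxf
  have hterm : ∀ q ∈ Thm51.Lsel p ℓ,
      (if q.1 = ℓ then Thm51.ww1 p a q else Thm51.ww2 p a q) ≤ |v (xf q)| := by
    intro q hq
    have hD := Thm51.DS_val p a ha ℓ hq
    obtain ⟨hge, hle⟩ := Thm51.DS'_val p a ha ℓ hq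
    have hvv : v (xf q) = 1 - wD' (xf q) := by
      have hD1 : wD (xf q) = 1 := hD
      rw [hv, Finsupp.sub_apply, hD1]
    have h12 := Thm51.ww_sum p ha q
    rw [hvv]
    refine le_trans ?_ (le_abs_self _)
    have hle' : wD' (xf q) ≤ if q.1 = ℓ then Thm51.ww2 p a q else Thm51.ww1 p a q := by
      rw [hwD', hxf]; exact hle
    split_ifs at hle' ⊢ with h
    · linarith
    · linarith
  have hmono : ((Thm51.Lsel p ℓ).map fun q =>
        if q.1 = ℓ then Thm51.ww1 p a q else Thm51.ww2 p a q).sum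
      ≤ ((Thm51.Lsel p ℓ).map fun q => |v (xf q)|).sum := List.sum_le_sum hterm
  have hinj : ∀ x ∈ Thm51.Lsel p ℓ, ∀ y ∈ Thm51.Lsel p ℓ, xf x = xf y → x = y := by
    intro x hx y hy hxy
    exact Thm51.cnv_inj p (Thm51.Lsel_subset_L p hx) (Thm51.Lsel_subset_L p hy)
      (congrArg Prod.snd hxy)
  have hnd : ((Thm51.Lsel p ℓ).map xf).Nodup := ((Thm51.nodup_L p).filter _).map_on hinj
  have hfs : ((Thm51.Lsel p ℓ).map fun q => |v (xf q)|).sum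
      = ∑ y ∈ ((Thm51.Lsel p ℓ).map xf).toFinset, |v y| := by
    rw [List.sum_toFinset _ hnd, List.map_map]
    rfl
  have hl1 : ∑ y ∈ ((Thm51.Lsel p ℓ).map xf).toFinset, |v y| ≤ l1dist wD wD' := by
    have h1 : ∑ y ∈ ((Thm51.Lsel p ℓ).map xf).toFinset, |v y|
        ≤ ∑ y ∈ ((Thm51.Lsel p ℓ).map xf).toFinset ∪ v.support, |v y| :=
      Finset.sum_le_sum_of_subset_of_nonneg Finset.subset_union_left
        (fun _ _ _ => abs_nonneg _)
    have h2 : ∑ y ∈ ((Thm51.Lsel p ℓ).map xf).toFinset ∪ v.support, |v y|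
        = ∑ y ∈ v.support, |v y| :=
      (Finset.sum_subset Finset.subset_union_right (fun y _ hy => by
        rw [Finsupp.notMem_support_iff.1 hy, abs_zero])).symm
    rw [l1dist, ← hv]
    exact le_trans h1 (le_of_eq h2)
  calc (0.5 : ℝ) * ((p : ℝ) - 1) = ((p : ℝ) - 1) / 2 := by ring
    _ ≤ _ := le_trans hW (le_trans hmono (le_trans (le_of_eq hfs) hl1))
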